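/- Let M be geometric with P(M = k) = p q^{k-1} (k ≥ 1) and Z_1, Z_2, ... i.i.d. Sibuya(α) independent of M. Then J^B = 1 + ∑_{k=1}^{M-1} Z_k has probability generating function E[u^{J^B}] = u/(1 + (q/p)(1-u)^α) for u ∈ [0,1). -/

import Mathlib

open MeasureTheory ProbabilityTheory

/-- Generalized binomial coefficient `binom(x, k) = x(x-1)⋯(x-k+1)/k!` for real `x`. -/
noncomputable def gbinom (x : ℝ) (k : ℕ) : ℝ :=
  (∏ i ∈ Finset.range k, (x - i)) / (Nat.factorial k)

/-- Sibuya(α) probability mass function. -/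
noncomputable def sibuya (α : ℝ) (k : ℕ) : ℝ :=
  if k = 0 then 0 else (-1 : ℝ) ^ (k - 1) * gbinom α k

lemma gbinom_succ (x : ℝ) (k : ℕ) :
    gbinom x (k+1) = gbinom x k * (x - k) / (k+1) := by
  simp only [gbinom, Finset.prod_range_succ, Nat.factorial_succ]
  push_cast
  have h1 : (Nat.factorial k : ℝ) ≠ 0 := Nat.cast_ne_zero.2 (Nat.factorial_ne_zero k)
  have h2 : (k : ℝ) + 1 ≠ 0 := by positivity
  field_simp

lemma sibuya_one (α : ℝ) : sibuya α 1 = α := by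
  simp [sibuya, gbinom]

lemma sibuya_zero (α : ℝ) : sibuya α 0 = 0 := by simp [sibuya]

lemma sibuya_succ (α : ℝ) {k : ℕ} (hk : 1 ≤ k) :
    sibuya α (k+1) = sibuya α k * ((k : ℝ) - α) / (k+1) := by
  obtain ⟨j, rfl⟩ := Nat.exists_eq_add_of_le hk
  simp only [sibuya, Nat.add_eq_zero, if_neg, Nat.succ_ne_zero, and_false, false_and,
    Nat.add_sub_cancel_left, gbinom_succ]
  norm_num
  rw [pow_add]
  ring

lemma sibuya_nonneg_bdd {α : ℝ} (hα : α ∈ Set.Ioo (0:ℝ) 1) :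
    ∀ k : ℕ, 0 ≤ sibuya α k ∧ (k : ℝ) * sibuya α k ≤ α := by
  obtain ⟨hα0, hα1⟩ := hα
  intro k
  induction k with
  | zero => simp [sibuya_zero]; linarith
  | succ n ih =>
    rcases Nat.eq_zero_or_pos n with rfl | hn
    · simp [sibuya_one]; linarith
    · have h1 : sibuya α (n+1) = sibuya α n * ((n : ℝ) - α) / (n+1) := sibuya_succ α hn
      have hnα : 0 ≤ (n : ℝ) - α := by
        have : (1:ℝ) ≤ n := by exact_mod_cast hn
        linarith
      have hpos : (0:ℝ) < n + 1 := by positivity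
      constructor
      · rw [h1]; exact div_nonneg (mul_nonneg ih.1 hnα) hpos.le
      · have : ((n:ℝ)+1) * sibuya α (n+1) = ((n : ℝ) - α) * sibuya α n := by
          rw [h1]; field_simp
        push_cast
        rw [this]
        calc ((n : ℝ) - α) * sibuya α n ≤ (n : ℝ) * sibuya α n := by
              apply mul_le_mul_of_nonneg_right _ ih.1; linarith
          _ ≤ α := ih.2

lemma sibuya_le_one {α : ℝ} (hα : α ∈ Set.Ioo (0:ℝ) 1) (k : ℕ) : sibuya α k ≤ 1 := by
  rcases Nat.eq_zero_or_pos k with rfl | hk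
  · simp [sibuya_zero]
  · have h := (sibuya_nonneg_bdd hα k).2
    have hk1 : (1:ℝ) ≤ k := by exact_mod_cast hk
    nlinarith [(sibuya_nonneg_bdd hα k).1, hα.2]

lemma summable_sibuya_mul_pow {α : ℝ} (hα : α ∈ Set.Ioo (0:ℝ) 1) {x : ℝ} (hx : |x| < 1) :
    Summable fun k => sibuya α k * x ^ k := by
  apply Summable.of_norm_bounded (g := fun k => |x| ^ k)
    (summable_geometric_of_lt_one (abs_nonneg x) hx)
  intro k
  rw [norm_mul, norm_pow, Real.norm_eq_abs, Real.norm_eq_abs,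
    abs_of_nonneg (sibuya_nonneg_bdd hα k).1]
  calc sibuya α k * |x| ^ k ≤ 1 * |x| ^ k := by
        apply mul_le_mul_of_nonneg_right (sibuya_le_one hα k) (by positivity)
    _ = |x| ^ k := one_mul _

lemma sibuya_pgf {α : ℝ} (hα : α ∈ Set.Ioo (0:ℝ) 1) {u : ℝ} (hu : u ∈ Set.Ico (0:ℝ) 1) :
    ∑' k, sibuya α k * u ^ k = 1 - (1 - u) ^ α := by
  obtain ⟨hu0, hu1⟩ := hu
  -- the sum function
  set G : ℝ → ℝ := fun x => ∑' k, sibuya α k * x ^ k with hG_def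
  have hG0 : G 0 = 0 := by
    have : (fun k => sibuya α k * (0:ℝ) ^ k) = fun _ => 0 := by
      funext k
      cases k with
      | zero => simp [sibuya_zero]
      | succ n => simp
    simp only [hG_def, this, tsum_zero]
  rcases eq_or_lt_of_le hu0 with rfl | hu0'
  · rw [show ∑' (k : ℕ), sibuya α k * (0:ℝ) ^ k = G 0 from rfl, hG0]
    norm_num
  -- now 0 < u < 1
  set r : ℝ := (1 + u) / 2 with hr_def
  have hr0 : 0 < r := by rw [hr_def]; linarith
  have hur : u < r := by rw [hr_def]; linarith
  have hr1 : r < 1 := by rw [hr_def]; linarith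
  set t : Set ℝ := Set.Ioo (-r) r with ht_def
  have hsub : Set.Icc 0 u ⊆ t := fun x hx => ⟨by linarith [hx.1], by linarith [hx.2]⟩
  set g' : ℕ → ℝ → ℝ := fun k x => sibuya α k * ((k : ℝ) * x ^ (k - 1)) with hg'_def
  set B : ℕ → ℝ := fun k => α * r ^ (k - 1) with hB_def
  have hBsum : Summable B := by
    apply Summable.of_norm_bounded (g := fun k => α * ((1/r) * r ^ k))
      (((summable_geometric_of_lt_one hr0.le hr1).mul_left _).mul_left α)
    intro k
    rw [Real.norm_eq_abs, abs_of_nonneg (by have h := hα.1; simp only [hB_def]; positivity)]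
    cases k with
    | zero =>
      simp only [hB_def, Nat.zero_sub, pow_zero, mul_one]
      have h1r : 1 ≤ 1 / r := by rw [le_div_iff₀ hr0]; linarith
      nlinarith [hα.1]
    | succ n =>
      simp only [hB_def, Nat.succ_sub_one, pow_succ]
      have : α * (1 / r * (r ^ n * r)) = α * r ^ n := by field_simp
      rw [this]
  have hg : ∀ k y, y ∈ t → HasDerivAt (fun x => sibuya α k * x ^ k) (g' k y) y :=
    fun k y _ => (hasDerivAt_pow k y).const_mul _
  have hg'le : ∀ k y, y ∈ t → ‖g' k y‖ ≤ B k := by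
    intro k y hy
    have hyr : |y| ≤ r := le_of_lt (abs_lt.2 ⟨hy.1, hy.2⟩)
    have h1 : 0 ≤ sibuya α k := (sibuya_nonneg_bdd hα k).1
    have h2 : (k : ℝ) * sibuya α k ≤ α := (sibuya_nonneg_bdd hα k).2
    rw [Real.norm_eq_abs, hg'_def]
    simp only
    rw [abs_mul, abs_mul, abs_pow, abs_of_nonneg h1, Nat.abs_cast]
    have h3 : |y| ^ (k-1) ≤ r ^ (k-1) := pow_le_pow_left₀ (abs_nonneg y) hyr _
    calc sibuya α k * ((k:ℝ) * |y| ^ (k-1)) = ((k:ℝ) * sibuya α k) * |y| ^ (k-1) := by ring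
      _ ≤ α * r ^ (k-1) := by
          apply mul_le_mul h2 h3 (by positivity) hα.1.le
  have hsum0 : Summable fun k => sibuya α k * (0:ℝ) ^ k :=
    summable_sibuya_mul_pow hα (by simp)
  have h0t : (0:ℝ) ∈ t := ⟨by linarith, hr0⟩
  have hG : ∀ y ∈ t, HasDerivAt G (∑' k, g' k y) y := by
    intro y hy
    exact hasDerivAt_tsum_of_isPreconnected hBsum isOpen_Ioo (convex_Ioo _ _).isPreconnected
      hg hg'le h0t hsum0 hy
  set D : ℝ → ℝ := fun y => ∑' k, g' k y with hD_def
  -- the ODE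
  have key : ∀ y ∈ t, (1 - y) * D y = α * (1 - G y) := by
    intro y hy
    have hy1 : |y| < 1 := lt_trans (abs_lt.2 ⟨hy.1, hy.2⟩) hr1
    have hS2 : Summable fun k => g' k y :=
      Summable.of_norm_bounded hBsum (fun k => hg'le k y hy)
    have hS1 : Summable fun k => sibuya α k * y ^ k := summable_sibuya_mul_pow hα hy1
    have hS3 : Summable fun k : ℕ => ((k:ℝ)+1) * sibuya α (k+1) * y ^ k := by
      have h := (summable_nat_add_iff 1).2 hS2
      apply h.congr
      intro k
      simp only [hg'_def, Nat.add_sub_cancel]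
      push_cast
      ring
    have hS4 : Summable fun k : ℕ => (k:ℝ) * sibuya α k * y ^ k := by
      apply (hS2.mul_right y).congr
      intro k
      cases k with
      | zero => simp [hg'_def, sibuya_zero]
      | succ n => simp only [hg'_def, Nat.succ_sub_one]; push_cast; ring
    have hD1 : D y = ∑' k : ℕ, ((k:ℝ)+1) * sibuya α (k+1) * y ^ k := by
      rw [hD_def]
      simp only
      rw [hS2.tsum_eq_zero_add]
      simp only [hg'_def, Nat.cast_zero, zero_mul, mul_zero, zero_add, Nat.add_sub_cancel]
      apply tsum_congr
      intro k
      push_cast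
      ring
    have hD2 : y * D y = ∑' k : ℕ, (k:ℝ) * sibuya α k * y ^ k := by
      rw [hD_def]
      simp only
      rw [← tsum_mul_left]
      apply tsum_congr
      intro k
      cases k with
      | zero => simp [hg'_def, sibuya_zero]
      | succ n => simp only [hg'_def, Nat.succ_sub_one]; push_cast; ring
    have hGy : α * G y = ∑' k : ℕ, α * (sibuya α k * y ^ k) := by
      rw [hG_def]; exact (tsum_mul_left).symm
    have hsingle : Summable fun k : ℕ => (if k = 0 then α else 0) * y ^ k := by
      apply summable_of_ne_finset_zero (s := {0})
      intro k hk
      simp only [Finset.mem_singleton] at hk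
      simp [hk]
    have hterm : ∀ k : ℕ, ((k:ℝ)+1) * sibuya α (k+1) * y ^ k - (k:ℝ) * sibuya α k * y ^ k
        = (if k = 0 then α else 0) * y ^ k - α * (sibuya α k * y ^ k) := by
      intro k
      cases k with
      | zero => simp [sibuya_one, sibuya_zero]
      | succ n =>
        have h1 : sibuya α (n+1+1) = sibuya α (n+1) * (((n:ℝ)+1) - α) / ((n:ℝ)+1+1) :=
          by have := sibuya_succ α (k := n+1) (Nat.succ_le_succ (Nat.zero_le n)); push_cast at this ⊢; exact this
        simp only [if_neg (Nat.succ_ne_zero n)]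
        push_cast
        rw [h1]
        have hne : ((n:ℝ)+1+1) ≠ 0 := by positivity
        field_simp
        ring
    have lhs_eq : (1 - y) * D y = ∑' k : ℕ, (((k:ℝ)+1) * sibuya α (k+1) * y ^ k
        - (k:ℝ) * sibuya α k * y ^ k) := by
      rw [sub_mul, one_mul, hD2, hD1, ← hS3.tsum_sub hS4]
    rw [lhs_eq]
    have rhs_eq : α * (1 - G y) = α - α * G y := by ring
    rw [rhs_eq, hGy]
    calc ∑' k : ℕ, (((k:ℝ)+1) * sibuya α (k+1) * y ^ k - (k:ℝ) * sibuya α k * y ^ k)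
        = ∑' k : ℕ, ((if k = 0 then α else 0) * y ^ k - α * (sibuya α k * y ^ k)) :=
          tsum_congr hterm
      _ = (∑' k : ℕ, (if k = 0 then α else 0) * y ^ k) - ∑' k : ℕ, α * (sibuya α k * y ^ k) :=
          hsingle.tsum_sub (hS1.mul_left α)
      _ = α - ∑' k : ℕ, α * (sibuya α k * y ^ k) := by
          congr 1
          rw [tsum_eq_single 0]
          · simp
          · intro b hb; simp [hb]
  -- the quotient function is constant
  set Φ : ℝ → ℝ := fun y => (1 - G y) * (1 - y) ^ (-α) with hΦ_def
  have hΦderiv : ∀ y ∈ t, HasDerivAt Φ 0 y := by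
    intro y hy
    have h1y : 0 < 1 - y := by have := hy.2; simp only [ht_def, Set.mem_Ioo] at hy; linarith [hy.2]
    have hA : HasDerivAt (fun x => 1 - G x) (-(D y)) y := (hG y hy).const_sub 1
    have hBd : HasDerivAt (fun x => (1 - x) ^ (-α)) ((-1) * (-α) * (1-y) ^ (-α-1)) y := by
      have hbase : HasDerivAt (fun x : ℝ => 1 - x) (-1) y := (hasDerivAt_id y).const_sub 1
      exact hbase.rpow_const (Or.inl h1y.ne')
    have hmul := hA.mul hBd
    have hzero : -(D y) * (1 - y) ^ (-α) + (1 - G y) * ((-1) * (-α) * (1-y) ^ (-α-1)) = 0 := by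
      have hpow : (1 - y) ^ (-α) = (1 - y) ^ (-α-1) * (1 - y) := by
        rw [← Real.rpow_add_one h1y.ne' (-α-1)]
        norm_num
      rw [hpow]
      linear_combination (-((1-y) ^ (-α-1))) * key y hy
    rw [hzero] at hmul
    exact hmul
  have hconst : Φ u = Φ 0 := by
    have hdiff : DifferentiableOn ℝ Φ (Set.Icc 0 u) := fun x hx =>
      ((hΦderiv x (hsub hx)).differentiableAt).differentiableWithinAt
    have hderiv : ∀ x ∈ Set.Ico 0 u, derivWithin Φ (Set.Icc 0 u) x = 0 := fun x hx =>
      ((hΦderiv x (hsub (Set.Ico_subset_Icc_self hx))).hasDerivWithinAt).derivWithin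
        (uniqueDiffOn_Icc hu0' x (Set.Ico_subset_Icc_self hx))
    exact constant_of_derivWithin_zero hdiff hderiv u (Set.right_mem_Icc.2 hu0)
  have hΦ0 : Φ 0 = 1 := by
    simp [hΦ_def, hG0, Real.one_rpow]
  have h1u : 0 < 1 - u := by linarith
  have hcancel : ((1:ℝ) - u) ^ (-α) * (1 - u) ^ α = 1 := by
    rw [← Real.rpow_add h1u]
    norm_num
  have hone : (1 - G u) * (1 - u) ^ (-α) = 1 := by
    calc (1 - G u) * (1 - u) ^ (-α) = Φ u := rfl
      _ = Φ 0 := hconst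
      _ = 1 := hΦ0
  have hGu : 1 - G u = (1 - u) ^ α := by
    have h2 : (1 - G u) * ((1 - u) ^ (-α) * (1 - u) ^ α) = (1 - u) ^ α := by
      rw [← mul_assoc, hone, one_mul]
    rwa [hcancel, mul_one] at h2
  have : G u = 1 - (1 - u) ^ α := by linarith
  exact this

/-- Let `M` be geometric with `P(M = k) = p q^(k-1)` for `k ≥ 1` (`q = 1-p`),
and `Z₁, Z₂, …` i.i.d. Sibuya(α) independent of `M`. Then the compound shifted sum
`J^B = 1 + ∑_{k=1}^{M-1} Z_k` has probability generating function
`E[u^(J^B)] = u/(1 + (q/p)(1-u)^α)` for `u ∈ [0,1)`. -/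
theorem compound_geometric_sibuya_pgf_B
    {Ω : Type*} [MeasurableSpace Ω] (μ : Measure Ω) [IsProbabilityMeasure μ]
    (α : ℝ) (hα : α ∈ Set.Ioo (0 : ℝ) 1)
    (p : ℝ) (hp : p ∈ Set.Ioc (0 : ℝ) 1)
    (Z : ℕ → Ω → ℕ) (hZmeas : ∀ i, Measurable (Z i))
    (hZindep : iIndepFun Z μ)
    (hZlaw : ∀ i k, (μ {ω | Z i ω = k}).toReal = sibuya α k)
    (M : Ω → ℕ) (hMmeas : Measurable M)
    (hMlaw : ∀ k : ℕ, 1 ≤ k → (μ {ω | M ω = k}).toReal = p * (1 - p) ^ (k - 1))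
    (hM0 : (μ {ω | M ω = 0}).toReal = 0)
    (hMZ : IndepFun M (fun ω => fun i => Z i ω) μ)
    (u : ℝ) (hu : u ∈ Set.Ico (0 : ℝ) 1) :
    ∫ ω, u ^ (1 + ∑ k ∈ Finset.range (M ω - 1), Z k ω) ∂μ
      = u / (1 + ((1 - p) / p) * (1 - u) ^ α) := by
  obtain ⟨hp0, hp1⟩ := hp
  obtain ⟨hu0, hu1⟩ := hu
  set s : ℝ := 1 - (1 - u) ^ α with hs_def
  have h1u : 0 < 1 - u := by linarith
  have hw0 : 0 < (1 - u) ^ α := Real.rpow_pos_of_pos h1u α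
  have hw1 : (1 - u) ^ α ≤ 1 := Real.rpow_le_one h1u.le (by linarith) hα.1.le
  have hs0 : 0 ≤ s := by rw [hs_def]; linarith
  have hs1 : s < 1 := by rw [hs_def]; linarith
  -- Step 1: pgf of a single Sibuya variable
  have hZpgf : ∀ i, ∫ ω, u ^ (Z i ω) ∂μ = s := by
    intro i
    have hmap : IsProbabilityMeasure (μ.map (Z i)) :=
      Measure.isProbabilityMeasure_map (hZmeas i).aemeasurable
    have hmeasf : Measurable fun n : ℕ => u ^ n := measurable_from_top
    have hint : Integrable (fun n : ℕ => u ^ n) (μ.map (Z i)) := by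
      apply (integrable_const (1:ℝ)).mono' hmeasf.aestronglyMeasurable
      apply ae_of_all
      intro n
      rw [Real.norm_eq_abs, abs_of_nonneg (pow_nonneg hu0 n)]
      exact pow_le_one₀ hu0 hu1.le
    have hmapint := integral_map (μ := μ) (hZmeas i).aemeasurable
      (f := fun n : ℕ => u ^ n) hmeasf.aestronglyMeasurable
    rw [← hmapint, integral_countable' hint]
    have hsingleton : ∀ n : ℕ, (μ.map (Z i)) {n} = μ {ω | Z i ω = n} := by
      intro n
      rw [Measure.map_apply (hZmeas i) (measurableSet_singleton n)]
      congr 1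
    calc ∑' n : ℕ, ((μ.map (Z i)) {n}).toReal • u ^ n
        = ∑' n : ℕ, sibuya α n * u ^ n := by
          apply tsum_congr
          intro n
          rw [hsingleton n, hZlaw i n, smul_eq_mul]
      _ = s := by rw [hs_def]; exact sibuya_pgf hα ⟨hu0, hu1⟩
  -- Step 2: pgf of partial sums
  have hSpgf : ∀ n, ∫ ω, u ^ (∑ k ∈ Finset.range n, Z k ω) ∂μ = s ^ n := by
    intro n
    induction n with
    | zero => simp
    | succ n ih =>
      have hind0 : IndepFun (∑ k ∈ Finset.range n, Z k) (Z n) μ :=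
        hZindep.indepFun_sum_range_succ hZmeas n
      have hind : IndepFun (fun ω => ∑ k ∈ Finset.range n, Z k ω) (Z n) μ := by
        have : (∑ k ∈ Finset.range n, Z k) = fun ω => ∑ k ∈ Finset.range n, Z k ω := by
          funext ω; simp [Finset.sum_apply]
        rwa [this] at hind0
      have hcomp : IndepFun (fun ω => u ^ (∑ k ∈ Finset.range n, Z k ω))
          (fun ω => u ^ (Z n ω)) μ :=
        hind.comp (measurable_from_top (f := fun m : ℕ => u ^ m)) measurable_from_top
      have hXm : AEStronglyMeasurable (fun ω => u ^ (∑ k ∈ Finset.range n, Z k ω)) μ :=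
        ((measurable_from_top (f := fun m : ℕ => u ^ m)).comp
          (Finset.measurable_sum (Finset.range n) (fun k _ => hZmeas k))).aestronglyMeasurable
      have hYm : AEStronglyMeasurable (fun ω => u ^ (Z n ω)) μ :=
        ((measurable_from_top (f := fun m : ℕ => u ^ m)).comp (hZmeas n)).aestronglyMeasurable
      calc ∫ ω, u ^ (∑ k ∈ Finset.range (n+1), Z k ω) ∂μ
          = ∫ ω, (u ^ (∑ k ∈ Finset.range n, Z k ω)) * u ^ (Z n ω) ∂μ := by
            apply integral_congr_ae
            apply ae_of_all
            intro ω
            simp only [Finset.sum_range_succ, pow_add]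
        _ = (∫ ω, u ^ (∑ k ∈ Finset.range n, Z k ω) ∂μ) * ∫ ω, u ^ (Z n ω) ∂μ :=
            hcomp.integral_fun_mul_eq_mul_integral hXm hYm
        _ = s ^ n * s := by rw [ih, hZpgf n]
        _ = s ^ (n+1) := (pow_succ s n).symm
  -- Step 3: decomposition over the values of M
  set g : ℕ → Ω → ℝ := fun m ω =>
    (if M ω = m then (1:ℝ) else 0) * u ^ (1 + ∑ k ∈ Finset.range (m-1), Z k ω) with hg_def
  have hMset : ∀ m : ℕ, MeasurableSet {ω | M ω = m} := fun m =>
    hMmeas (measurableSet_singleton m)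
  have hgmeas : ∀ m, Measurable (g m) := by
    intro m
    apply Measurable.mul
    · exact Measurable.ite (hMset m) measurable_const measurable_const
    · exact (measurable_from_top (f := fun j : ℕ => u ^ j)).comp
        (measurable_const.add (Finset.measurable_sum _ fun k _ => hZmeas k))
  have hpt : ∀ ω, ∑' m, g m ω = u ^ (1 + ∑ k ∈ Finset.range (M ω - 1), Z k ω) := by
    intro ω
    rw [tsum_eq_single (M ω) ?_]
    · simp [hg_def]
    · intro m hm
      simp only [hg_def]
      rw [if_neg (fun h => hm h.symm), zero_mul]
  have hbound : (∑' m, ∫⁻ ω, (‖g m ω‖₊ : ENNReal) ∂μ) ≠ ⊤ := by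
    have hle : ∀ m, ∫⁻ ω, (‖g m ω‖₊ : ENNReal) ∂μ ≤ μ {ω | M ω = m} := by
      intro m
      calc ∫⁻ ω, (‖g m ω‖₊ : ENNReal) ∂μ
          ≤ ∫⁻ ω, Set.indicator {ω | M ω = m} (fun _ => (1:ENNReal)) ω ∂μ := by
            apply lintegral_mono
            intro x
            by_cases h : M x = m
            · rw [Set.indicator_of_mem (show x ∈ {ω | M ω = m} from h)]
              simp only [hg_def, if_pos h, one_mul]
              rw [← enorm_eq_nnnorm, ← ofReal_norm]
              calc ENNReal.ofReal ‖u ^ (1 + ∑ k ∈ Finset.range (m-1), Z k x)‖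
                  ≤ ENNReal.ofReal 1 := by
                    apply ENNReal.ofReal_le_ofReal
                    rw [Real.norm_eq_abs, abs_of_nonneg (pow_nonneg hu0 _)]
                    exact pow_le_one₀ hu0 hu1.le
                _ = 1 := ENNReal.ofReal_one
            · rw [Set.indicator_of_notMem (show x ∉ {ω | M ω = m} from h)]
              simp [hg_def, if_neg h]
        _ = μ {ω | M ω = m} := by
            rw [lintegral_indicator (hMset m)]
            simp
    have hsum1 : ∑' m, μ {ω | M ω = m} = 1 := by
      have hdisj : Pairwise (Function.onFun Disjoint fun m => {ω | M ω = m}) := by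
        intro a b hab
        rw [Function.onFun, Set.disjoint_left]
        intro ω ha hb
        exact hab (ha ▸ hb ▸ rfl)
      rw [← measure_iUnion hdisj hMset]
      have : ⋃ m, {ω | M ω = m} = Set.univ := by ext ω; simp
      rw [this, measure_univ]
    apply ne_of_lt
    calc (∑' m, ∫⁻ ω, (‖g m ω‖₊ : ENNReal) ∂μ) ≤ ∑' m, μ {ω | M ω = m} := ENNReal.tsum_le_tsum hle
      _ = 1 := hsum1
      _ < ⊤ := ENNReal.one_lt_top
  have hdecomp : ∫ ω, u ^ (1 + ∑ k ∈ Finset.range (M ω - 1), Z k ω) ∂μ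
      = ∑' m, ∫ ω, g m ω ∂μ := by
    calc ∫ ω, u ^ (1 + ∑ k ∈ Finset.range (M ω - 1), Z k ω) ∂μ
        = ∫ ω, ∑' m, g m ω ∂μ :=
          integral_congr_ae (ae_of_all _ fun ω => (hpt ω).symm)
      _ = ∑' m, ∫ ω, g m ω ∂μ :=
          integral_tsum (fun m => (hgmeas m).aestronglyMeasurable) hbound
  -- Step 4: evaluate each term
  have hterm : ∀ m, ∫ ω, g m ω ∂μ = (μ {ω | M ω = m}).toReal * (u * s ^ (m-1)) := by
    intro m
    have hY : ∫ ω, u ^ (1 + ∑ k ∈ Finset.range (m-1), Z k ω) ∂μ = u * s ^ (m-1) := by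
      calc ∫ ω, u ^ (1 + ∑ k ∈ Finset.range (m-1), Z k ω) ∂μ
          = ∫ ω, u * u ^ (∑ k ∈ Finset.range (m-1), Z k ω) ∂μ := by
            apply integral_congr_ae
            apply ae_of_all
            intro ω
            simp only [pow_add, pow_one]
        _ = u * ∫ ω, u ^ (∑ k ∈ Finset.range (m-1), Z k ω) ∂μ := integral_const_mul u _
        _ = u * s ^ (m-1) := by rw [hSpgf (m-1)]
    have hindep : IndepFun (fun ω => if M ω = m then (1:ℝ) else 0)
        (fun ω => u ^ (1 + ∑ k ∈ Finset.range (m-1), Z k ω)) μ := by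
      have hφ : Measurable (fun n : ℕ => if n = m then (1:ℝ) else 0) := measurable_from_top
      have hψ : Measurable (fun z : ℕ → ℕ => u ^ (1 + ∑ k ∈ Finset.range (m-1), z k)) :=
        (measurable_from_top (f := fun j : ℕ => u ^ j)).comp
          (measurable_const.add (Finset.measurable_sum _ fun k _ => measurable_pi_apply k))
      exact hMZ.comp hφ hψ
    have hX : AEStronglyMeasurable (fun ω => if M ω = m then (1:ℝ) else 0) μ :=
      (Measurable.ite (hMset m) measurable_const measurable_const).aestronglyMeasurable
    have hYm : AEStronglyMeasurable
        (fun ω => u ^ (1 + ∑ k ∈ Finset.range (m-1), Z k ω)) μ :=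
      ((measurable_from_top (f := fun j : ℕ => u ^ j)).comp
        (measurable_const.add (Finset.measurable_sum _ fun k _ => hZmeas k))).aestronglyMeasurable
    have hXint : ∫ ω, (if M ω = m then (1:ℝ) else 0) ∂μ = (μ {ω | M ω = m}).toReal := by
      have hfeq : (fun ω => if M ω = m then (1:ℝ) else 0)
          = Set.indicator {ω | M ω = m} (fun _ => (1:ℝ)) := by
        funext ω
        by_cases h : M ω = m
        · simp [h]
        · simp [h]
      rw [hfeq, integral_indicator_const (1:ℝ) (hMset m), smul_eq_mul, mul_one]
      rfl
    calc ∫ ω, g m ω ∂μ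
        = (∫ ω, (if M ω = m then (1:ℝ) else 0) ∂μ)
            * ∫ ω, u ^ (1 + ∑ k ∈ Finset.range (m-1), Z k ω) ∂μ :=
          hindep.integral_fun_mul_eq_mul_integral hX hYm
      _ = (μ {ω | M ω = m}).toReal * (u * s ^ (m-1)) := by rw [hXint, hY]
  -- Step 5: sum the geometric series
  set b : ℕ → ℝ := fun m => if m = 0 then 0 else (p * u) * ((1-p) * s) ^ (m-1) with hb_def
  have hbeq : ∀ m, (μ {ω | M ω = m}).toReal * (u * s ^ (m-1)) = b m := by
    intro m
    cases m with
    | zero => simp [hb_def, hM0]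
    | succ n =>
      rw [hMlaw (n+1) (Nat.succ_le_succ (Nat.zero_le n))]
      simp only [hb_def, Nat.succ_sub_one, if_neg (Nat.succ_ne_zero n)]
      rw [mul_pow]
      ring
  have hqs0 : 0 ≤ (1-p) * s := mul_nonneg (by linarith) hs0
  have hqs1 : (1-p) * s < 1 := by nlinarith
  have hgeom : Summable (fun j : ℕ => (p * u) * ((1-p) * s) ^ j) :=
    (summable_geometric_of_lt_one hqs0 hqs1).mul_left _
  have hshift : (fun j : ℕ => b (j+1)) = fun j : ℕ => (p * u) * ((1-p) * s) ^ j := by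
    funext j
    simp [hb_def]
  have hbsum : Summable b := (summable_nat_add_iff 1).1 (hshift ▸ hgeom)
  have htsum : ∑' m, b m = (p * u) * (1 - (1-p) * s)⁻¹ := by
    rw [hbsum.tsum_eq_zero_add]
    simp only [hb_def, if_pos rfl, zero_add]
    rw [show (∑' (j : ℕ), if j + 1 = 0 then 0 else p * u * ((1 - p) * s) ^ (j + 1 - 1))
        = ∑' (j : ℕ), p * u * ((1-p) * s) ^ j from tsum_congr fun j => by
          simp [Nat.succ_ne_zero]]
    rw [tsum_mul_left, tsum_geometric_of_lt_one hqs0 hqs1]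
  -- conclusion
  rw [hdecomp]
  calc ∑' m, ∫ ω, g m ω ∂μ = ∑' m, b m := by
        apply tsum_congr
        intro m
        rw [hterm m, hbeq m]
    _ = (p * u) * (1 - (1-p) * s)⁻¹ := htsum
    _ = u / (1 + ((1 - p) / p) * (1 - u) ^ α) := by
        have hden : 1 - (1-p) * s = p + (1-p) * (1 - u) ^ α := by rw [hs_def]; ring
        have hdenpos : 0 < p + (1-p) * (1 - u) ^ α := by nlinarith
        have h2 : 1 + ((1-p)/p) * (1-u)^α = (p + (1-p)*(1-u)^α)/p := by
          field_simp
        rw [hden, h2, div_div_eq_mul_div, div_eq_mul_inv]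
        ring
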